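/- arXiv:2105.02910 — 2 statements merged into one kernel-verified Lean document; each statement's English description precedes it below -/
import Mathlib

section
/- Let G be a 3-edge-connected graph with DFS tree T, and let {(u,p(u)), (v,p(v)), e} be a 3-edge cut of G where e is a back-edge and u ≠ v. Then u and v are related as ancestor and descendant in T. -/
variable {V E : Type}

/-- Reachability in the multigraph with edge-endpoint map `ends`,
avoiding (i.e. after deleting) the edges in `S`. -/
def Reach (ends : E → V × V) (S : Set E) : V → V → Prop :=
  Relation.ReflTransGen (fun a b => ∃ e, e ∉ S ∧ (ends e = (a, b) ∨ ends e = (b, a)))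

/-- The multigraph is connected. -/
def Connected (ends : E → V × V) : Prop := ∀ u v : V, Reach ends ∅ u v

/-- `u` and `v` are `k`-edge-connected: no set of at most `k - 1` edges separates them. -/
def KConn (ends : E → V × V) (k : ℕ) (u v : V) : Prop :=
  ∀ S : Finset E, S.card ≤ k - 1 → Reach ends (↑S) u v

/-- The multigraph is `k`-edge-connected: no edge cut of size less than `k`. -/
def GraphKConn (ends : E → V × V) (k : ℕ) : Prop :=
  ∀ S : Finset E, S.card < k → ∀ u v : V, Reach ends (↑S) u v

/-- `S` is an edge cut: removing it disconnects the graph. -/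
def IsCutSet (ends : E → V × V) (S : Set E) : Prop :=
  ∃ u v : V, ¬ Reach ends S u v

/-- A (candidate) DFS tree on the multigraph `ends : E → V × V`: a root, a parent
function, a choice of a tree edge for each non-root vertex, and a preorder numbering. -/
structure DFSTree (V E : Type) where
  ends : E → V × V
  root : V
  parent : V → V
  treeEdge : V → E
  pre : V → ℕ

namespace DFSTree

variable (t : DFSTree V E)

/-- `t.Anc a b` : `a` is an ancestor of `b` (every vertex is an ancestor of itself). -/
def Anc (a b : V) : Prop :=
  Relation.ReflTransGen (fun x y => x ≠ t.root ∧ y = t.parent x) b a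

/-- `a` is a proper ancestor of `b`. -/
def ProperAnc (a b : V) : Prop := t.Anc a b ∧ a ≠ b

def IsTreeEdge (e : E) : Prop := ∃ v, v ≠ t.root ∧ e = t.treeEdge v

/-- The set `B(v)`: back-edges `(x, y)` with `x` a descendant of `v` and `y` a
proper ancestor of `v`. -/
def B (v : V) : Set E :=
  {e | ¬ t.IsTreeEdge e ∧ t.Anc v (t.ends e).1 ∧ t.ProperAnc (t.ends e).2 v}

/-- `m` is the nearest common ancestor of the set `S` of vertices. -/
def IsNCA (S : Set V) (m : V) : Prop :=
  (∀ x ∈ S, t.Anc m x) ∧ ∀ m' : V, (∀ x ∈ S, t.Anc m' x) → t.Anc m' m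

/-- `m = M(v)`: the nearest common ancestor of all lower ends of back-edges in `B(v)`. -/
def IsM (v m : V) : Prop := t.IsNCA {x | ∃ e ∈ t.B v, (t.ends e).1 = x} m

/-- `h = high(v)`: the highest (in preorder) upper end of a back-edge in `B(v)`. -/
def IsHigh (v h : V) : Prop :=
  (∃ e ∈ t.B v, (t.ends e).2 = h) ∧ ∀ e ∈ t.B v, t.pre (t.ends e).2 ≤ t.pre h

/-- `l = low(v)`: the lowest (in preorder) upper end of a back-edge in `B(v)`. -/
def IsLow (v l : V) : Prop :=
  (∃ e ∈ t.B v, (t.ends e).2 = l) ∧ ∀ e ∈ t.B v, t.pre l ≤ t.pre (t.ends e).2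

/-- `v` and `w` have the same `M`-value. -/
def SameM (v w : V) : Prop := ∃ m, t.IsM v m ∧ t.IsM w m

/-- `n = nextM(v)`: the greatest vertex smaller than `v` with the same `M`-value. -/
def IsNextM (v n : V) : Prop :=
  t.pre n < t.pre v ∧ t.SameM v n ∧
    ∀ z, t.pre z < t.pre v → t.SameM v z → t.pre z ≤ t.pre n

/-- `l = lastM(v)`: the smallest vertex with the same `M`-value as `v`. -/
def IsLastM (v l : V) : Prop :=
  t.SameM v l ∧ ∀ z, t.SameM v z → t.pre l ≤ t.pre z

/-- `t` really is a DFS spanning tree of the connected multigraph `ends`. -/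
structure IsDFS : Prop where
  conn : Connected t.ends
  parent_root : t.parent t.root = t.root
  tree_ends : ∀ v, v ≠ t.root → t.ends (t.treeEdge v) = (v, t.parent v)
  treeEdge_inj : ∀ v w, v ≠ t.root → w ≠ t.root → t.treeEdge v = t.treeEdge w → v = w
  back : ∀ e, ¬ t.IsTreeEdge e → t.Anc (t.ends e).2 (t.ends e).1
  pre_inj : Function.Injective t.pre
  pre_mono : ∀ a b, t.Anc a b → t.pre a ≤ t.pre b
  pre_interval : ∀ a b : V,
    t.pre a ≤ t.pre b → t.pre b < t.pre a + {x | t.Anc a x}.ncard → t.Anc a b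

end DFSTree

section Helpers

variable (t : DFSTree V E)

private lemma anc_root {a : V} (h : t.Anc a t.root) : a = t.root := by
  rcases Relation.ReflTransGen.cases_head h with h | ⟨c, ⟨hr, _⟩, _⟩
  · exact h.symm
  · exact absurd rfl hr

private lemma anc_antisymm (ht : t.IsDFS) {a b : V} (h1 : t.Anc a b) (h2 : t.Anc b a) :
    a = b :=
  ht.pre_inj (le_antisymm (ht.pre_mono a b h1) (ht.pre_mono b a h2))

private lemma anc_trans {a b c : V} (h1 : t.Anc a b) (h2 : t.Anc b c) : t.Anc a c :=
  Relation.ReflTransGen.trans h2 h1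

private lemma anc_parent {a : V} (ha : a ≠ t.root) : t.Anc (t.parent a) a :=
  Relation.ReflTransGen.single ⟨ha, rfl⟩

private lemma anc_step {a b : V} (h : t.Anc a b) (hne : b ≠ a) :
    b ≠ t.root ∧ t.Anc a (t.parent b) := by
  rcases Relation.ReflTransGen.cases_head h with h | ⟨c, ⟨hr, hc⟩, rest⟩
  · exact absurd h hne
  · subst hc; exact ⟨hr, rest⟩

private lemma anc_fix {w : V} (hpw : t.parent w = w) {z : V} (h : t.Anc z w) : z = w := by
  unfold DFSTree.Anc at h
  induction h with
  | refl => rfl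
  | tail _ hstep ih => rw [hstep.2, ih, hpw]

private lemma anc_total {a b : V} :
    ∀ {c : V}, t.Anc a c → t.Anc b c → t.Anc a b ∨ t.Anc b a := by
  intro c h1
  unfold DFSTree.Anc at h1
  induction h1 using Relation.ReflTransGen.head_induction_on with
  | refl => exact fun h2 => Or.inr h2
  | @head x c' h' hrest ih =>
    intro h2
    rcases Relation.ReflTransGen.cases_head h2 with h | ⟨d, hd, rest2⟩
    · exact Or.inl (by rw [← h]; exact Relation.ReflTransGen.head h' hrest)
    · have hd2 : d = c' := by rw [hd.2, h'.2]
      exact ih (hd2 ▸ rest2)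

private lemma climb (ht : t.IsDFS) (S : Set E) :
    ∀ x z : V, t.Anc z x →
      (∀ w, t.Anc z w → t.Anc w x → w ≠ z → t.treeEdge w ∉ S) →
      Reach t.ends S x z := by
  intro x z h
  unfold DFSTree.Anc at h
  induction h using Relation.ReflTransGen.head_induction_on with
  | refl => exact fun _ => Relation.ReflTransGen.refl
  | @head a c h' hrest ih =>
    intro hw
    by_cases haz : a = z
    · subst haz; exact Relation.ReflTransGen.refl
    · obtain ⟨har, hc⟩ := h'
      have hchain : t.Anc z a := Relation.ReflTransGen.head ⟨har, hc⟩ hrest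
      have hnotS : t.treeEdge a ∉ S := hw a hchain Relation.ReflTransGen.refl haz
      have hstep : Reach t.ends S a c :=
        Relation.ReflTransGen.single ⟨t.treeEdge a, hnotS, Or.inl (by rw [ht.tree_ends a har, hc])⟩
      refine Relation.ReflTransGen.trans hstep (ih ?_)
      intro w hzw hwc hwz
      exact hw w hzw (Relation.ReflTransGen.head ⟨har, hc⟩ hwc) hwz

private lemma reach_symm {ends : E → V × V} {S' : Set E} {x y : V}
    (h : Reach ends S' x y) : Reach ends S' y x := by
  unfold Reach at *
  exact (@Relation.ReflTransGen.stdSymm _ _ ⟨fun a b ⟨g, hg, ho⟩ => ⟨g, hg, ho.symm⟩⟩).symm _ _ h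

private lemma reach_mem (ends : E → V × V) (S' : Set E) (P : Set V)
    (hcross : ∀ f, f ∉ S' → ((ends f).1 ∈ P ↔ (ends f).2 ∈ P)) :
    ∀ x y, Reach ends S' x y → x ∈ P → y ∈ P := by
  intro x y h
  unfold Reach at h
  induction h with
  | refl => exact id
  | tail _ hstep ih =>
    intro hx
    obtain ⟨g, hgS, hg | hg⟩ := hstep
    · have h' := hcross g hgS; rw [hg] at h'; exact h'.mp (ih hx)
    · have h' := hcross g hgS; rw [hg] at h'; exact h'.mpr (ih hx)

private lemma detour {ends : E → V × V} {S' : Set E}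
    (hS : ∀ f ∈ S', Reach ends S' (ends f).1 (ends f).2) :
    ∀ x y, Reach ends ∅ x y → Reach ends S' x y := by
  intro x y h
  unfold Reach at h ⊢
  induction h with
  | refl => exact Relation.ReflTransGen.refl
  | tail _ hstep ih =>
    obtain ⟨g, _, hg | hg⟩ := hstep
    · by_cases hgS : g ∈ S'
      · have h' := hS g hgS; rw [hg] at h'; exact Relation.ReflTransGen.trans ih h'
      · exact Relation.ReflTransGen.tail ih ⟨g, hgS, Or.inl hg⟩
    · by_cases hgS : g ∈ S'
      · have h' := hS g hgS; rw [hg] at h'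
        exact Relation.ReflTransGen.trans ih (reach_symm h')
      · exact Relation.ReflTransGen.tail ih ⟨g, hgS, Or.inr hg⟩

private lemma notS (ht : t.IsDFS) {u v : V} (hu : u ≠ t.root) (hv : v ≠ t.root) {e : E}
    (hback : ¬ t.IsTreeEdge e) {w : V} (hwr : w ≠ t.root) (hwu : w ≠ u) (hwv : w ≠ v) :
    t.treeEdge w ∉ ({t.treeEdge u, t.treeEdge v, e} : Set E) := by
  intro h
  simp only [Set.mem_insert_iff, Set.mem_singleton_iff] at h
  rcases h with h | h | h
  · exact hwu (ht.treeEdge_inj w u hwr hu h)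
  · exact hwv (ht.treeEdge_inj w v hwr hv h)
  · exact hback ⟨w, hwr, h.symm⟩

private lemma exists_back (ht : t.IsDFS) (h3 : GraphKConn t.ends 3) (w : V)
    (hw : w ≠ t.root) (hpw : t.parent w ≠ w) (e' : E) :
    ∃ f ∈ t.B w, f ≠ e' := by
  classical
  by_contra hno
  push_neg at hno
  have hcard : ({t.treeEdge w, e'} : Finset E).card < 3 := by
    have h := Finset.card_insert_le (t.treeEdge w) ({e'} : Finset E)
    simp only [Finset.card_singleton] at h
    omega
  have hreach := h3 {t.treeEdge w, e'} hcard w (t.parent w)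
  have hcross : ∀ f, f ∉ (({t.treeEdge w, e'} : Finset E) : Set E) →
      ((t.ends f).1 ∈ {x | t.Anc w x} ↔ (t.ends f).2 ∈ {x | t.Anc w x}) := by
    intro f hf
    simp only [Finset.coe_insert, Finset.coe_singleton, Set.mem_insert_iff,
      Set.mem_singleton_iff, not_or] at hf
    by_cases htf : t.IsTreeEdge f
    · obtain ⟨w', hw', hfe⟩ := htf
      subst hfe
      rw [ht.tree_ends w' hw']
      simp only [Set.mem_setOf_eq]
      constructor
      · intro h1
        have hne : w' ≠ w := fun h => hf.1 (by rw [h])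
        exact (anc_step t h1 hne).2
      · intro h1
        exact anc_trans t h1 (anc_parent t hw')
    · have hb := ht.back f htf
      simp only [Set.mem_setOf_eq]
      constructor
      · intro h1
        rcases anc_total t h1 hb with h2 | h2
        · exact h2
        · by_cases hbw : (t.ends f).2 = w
          · rw [hbw]; exact Relation.ReflTransGen.refl
          · exact absurd (hno f ⟨htf, h1, h2, hbw⟩) hf.2
      · intro h1
        exact anc_trans t h1 hb
  have hmem : t.parent w ∈ {x | t.Anc w x} :=
    reach_mem t.ends _ {x | t.Anc w x} hcross w (t.parent w) hreach
      Relation.ReflTransGen.refl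
  exact hpw (anc_antisymm t ht (anc_parent t hw) hmem)

private lemma reach_up (ht : t.IsDFS) (h3 : GraphKConn t.ends 3) (u v : V) (e : E)
    (hu : u ≠ t.root) (hv : v ≠ t.root)
    (hback : ¬ t.IsTreeEdge e)
    (hnuv : ¬ t.Anc u v) (hnvu : ¬ t.Anc v u) (y : V)
    (hyu : t.Anc y u) (hyne : y ≠ u) :
    Reach t.ends {t.treeEdge u, t.treeEdge v, e} u y := by
  have hpu : t.parent u ≠ u := fun h => hyne (anc_fix t h hyu)
  obtain ⟨f, hfB, hfe⟩ := exists_back t ht h3 u hu hpu e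
  obtain ⟨hft, hfa, hfb, hfbu⟩ : ¬ t.IsTreeEdge f ∧ t.Anc u (t.ends f).1 ∧
      t.Anc (t.ends f).2 u ∧ (t.ends f).2 ≠ u := ⟨hfB.1, hfB.2.1, hfB.2.2.1, hfB.2.2.2⟩
  have hfS : f ∉ ({t.treeEdge u, t.treeEdge v, e} : Set E) := by
    simp only [Set.mem_insert_iff, Set.mem_singleton_iff, not_or]
    exact ⟨fun h => hft ⟨u, hu, h⟩, fun h => hft ⟨v, hv, h⟩, hfe⟩
  have R1 : Reach t.ends {t.treeEdge u, t.treeEdge v, e} u (t.ends f).1 := by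
    refine reach_symm (climb t ht _ (t.ends f).1 u hfa ?_)
    intro w h1 _ h3'
    refine notS t ht hu hv hback ?_ h3' ?_
    · intro h; subst h; exact hu (anc_root t h1)
    · intro h; subst h; exact hnuv h1
  have R2 : Reach t.ends {t.treeEdge u, t.treeEdge v, e} (t.ends f).1 (t.ends f).2 :=
    Relation.ReflTransGen.single ⟨f, hfS, Or.inl rfl⟩
  have R3 : Reach t.ends {t.treeEdge u, t.treeEdge v, e} (t.ends f).2 y := by
    rcases anc_total t hfb hyu with h2 | h2
    · -- h2 : Anc (ends f).2 y, i.e. y is below b: climb from y to b, then flip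
      refine reach_symm (climb t ht _ y (t.ends f).2 h2 ?_)
      intro w hw1 hw2 hw3
      refine notS t ht hu hv hback ?_ ?_ ?_
      · intro h; subst h
        exact hw3 (anc_root t hw1).symm
      · intro h; subst h
        exact hyne (anc_antisymm t ht hw2 hyu).symm
      · intro h; subst h
        exact hnvu (anc_trans t hw2 hyu)
    · -- h2 : Anc y (ends f).2 : climb from b up to y
      refine climb t ht _ (t.ends f).2 y h2 ?_
      intro w hw1 hw2 hw3
      refine notS t ht hu hv hback ?_ ?_ ?_
      · intro h; subst h
        exact hw3 (anc_root t hw1).symm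
      · intro h; subst h
        exact hfbu (anc_antisymm t ht hw2 hfb).symm
      · intro h; subst h
        exact hnvu (anc_trans t hw2 hfb)
  exact Relation.ReflTransGen.trans R1 (Relation.ReflTransGen.trans R2 R3)

end Helpers

/-- If `{(u, p(u)), (v, p(v)), e}` is a 3-edge cut of a 3-edge-connected graph,
with `e` a back-edge and `u ≠ v`, then `u` and `v` are related as ancestor and
descendant. -/
theorem cut_two_tree_edges_ancestor_related (t : DFSTree V E) (ht : t.IsDFS)
    (h3 : GraphKConn t.ends 3) (u v : V) (e : E)
    (hu : u ≠ t.root) (hv : v ≠ t.root) (huv : u ≠ v)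
    (hback : ¬ t.IsTreeEdge e)
    (hcut : IsCutSet t.ends {t.treeEdge u, t.treeEdge v, e}) :
    t.Anc u v ∨ t.Anc v u := by
  by_contra hrel
  push_neg at hrel
  obtain ⟨hnuv, hnvu⟩ := hrel
  obtain ⟨a0, b0, hab⟩ := hcut
  refine hab (detour ?_ a0 b0 (ht.conn a0 b0))
  intro f hf
  have hswap : ({t.treeEdge u, t.treeEdge v, e} : Set E) = {t.treeEdge v, t.treeEdge u, e} :=
    Set.insert_comm _ _ _
  simp only [Set.mem_insert_iff, Set.mem_singleton_iff] at hf
  rcases hf with rfl | rfl | rfl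
  · rw [ht.tree_ends u hu]
    by_cases hpu : t.parent u = u
    · rw [hpu]; exact Relation.ReflTransGen.refl
    · exact reach_up t ht h3 u v e hu hv hback hnuv hnvu (t.parent u) (anc_parent t hu) hpu
  · rw [ht.tree_ends v hv]
    by_cases hpv : t.parent v = v
    · rw [hpv]; exact Relation.ReflTransGen.refl
    · rw [hswap]
      exact reach_up t ht h3 v u e hv hu hback hnvu hnuv (t.parent v) (anc_parent t hv) hpv
  · have hyx : t.Anc (t.ends f).2 (t.ends f).1 := ht.back f hback
    by_cases hBu : t.Anc u (t.ends f).1 ∧ t.Anc (t.ends f).2 u ∧ (t.ends f).2 ≠ u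
    · have Rx : Reach t.ends {t.treeEdge u, t.treeEdge v, f} (t.ends f).1 u := by
        refine climb t ht _ (t.ends f).1 u hBu.1 ?_
        intro w hw1 hw2 hw3
        refine notS t ht hu hv hback ?_ hw3 ?_
        · intro h; subst h; exact hu (anc_root t hw1)
        · intro h; subst h; exact hnuv hw1
      exact Relation.ReflTransGen.trans Rx
        (reach_up t ht h3 u v f hu hv hback hnuv hnvu (t.ends f).2 hBu.2.1 hBu.2.2)
    · by_cases hBv : t.Anc v (t.ends f).1 ∧ t.Anc (t.ends f).2 v ∧ (t.ends f).2 ≠ v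
      · have Rx : Reach t.ends {t.treeEdge u, t.treeEdge v, f} (t.ends f).1 v := by
          refine climb t ht _ (t.ends f).1 v hBv.1 ?_
          intro w hw1 hw2 hw3
          refine notS t ht hu hv hback ?_ ?_ hw3
          · intro h; subst h; exact hv (anc_root t hw1)
          · intro h; subst h; exact hnvu hw1
        refine Relation.ReflTransGen.trans Rx ?_
        rw [hswap]
        exact reach_up t ht h3 v u f hv hu hback hnvu hnuv (t.ends f).2 hBv.2.1 hBv.2.2
      · refine climb t ht _ (t.ends f).1 (t.ends f).2 hyx ?_
        intro w hw1 hw2 hw3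
        refine notS t ht hu hv hback ?_ ?_ ?_
        · intro h; subst h; exact hw3 (anc_root t hw1).symm
        · intro h; subst h; exact hBu ⟨hw2, hw1, Ne.symm hw3⟩
        · intro h; subst h; exact hBv ⟨hw2, hw1, Ne.symm hw3⟩
end

section
/- Let G be a 3-edge-connected graph with DFS tree T. For a vertex v, let U(v) be the set of descendants u of v such that B(u) = B(v) ⊔ {e} for some back-edge e. Then for distinct vertices v ≠ v', U(v) ∩ U(v') = ∅. -/
variable {V E : Type}

namespace DFSTree

variable {t : DFSTree V E}

lemma anc_refl' (a : V) : t.Anc a a := Relation.ReflTransGen.refl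

lemma anc_trans' {a b c : V} (h1 : t.Anc a b) (h2 : t.Anc b c) : t.Anc a c :=
  Relation.ReflTransGen.trans h2 h1

lemma anc_antisymm' (ht : t.IsDFS) {a b : V} (h1 : t.Anc a b) (h2 : t.Anc b a) : a = b :=
  ht.pre_inj (le_antisymm (ht.pre_mono a b h1) (ht.pre_mono b a h2))

lemma anc_comparable' {a b u : V} (ha : t.Anc a u) (hb : t.Anc b u) :
    t.Anc a b ∨ t.Anc b a := by
  unfold Anc at *
  revert hb
  induction ha using Relation.ReflTransGen.head_induction_on with
  | refl => exact fun hb => Or.inr hb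
  | head h' h ih =>
    intro hb
    rcases hb.cases_head with rfl | ⟨d, hd, hdb⟩
    · exact Or.inl (Relation.ReflTransGen.head h' h)
    · rcases h' with ⟨hr, rfl⟩
      rcases hd with ⟨_, rfl⟩
      exact ih hdb

lemma anc_of_anc_parent' {z w : V} (h : t.Anc z (t.parent w)) (hw : w ≠ t.root) :
    t.Anc z w :=
  Relation.ReflTransGen.head ⟨hw, rfl⟩ h

lemma anc_parent_of_anc' {z w : V} (h : t.Anc z w) (hzw : z ≠ w) :
    t.Anc z (t.parent w) := by
  rcases h.cases_head with rfl | ⟨d, ⟨_, rfl⟩, hd⟩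
  · exact absurd rfl (Ne.symm hzw)
  · exact hd

lemma reach_mem_iff' {ends : E → V × V} {S : Set E} {A : Set V}
    (hA : ∀ e, e ∉ S → ((ends e).1 ∈ A ↔ (ends e).2 ∈ A))
    {a b : V} (h : Reach ends S a b) : (a ∈ A ↔ b ∈ A) := by
  induction h with
  | refl => rfl
  | @tail b c hab hbc ih =>
    rcases hbc with ⟨e, heS, h1 | h1⟩ <;>
    · have := hA e heS
      rw [h1] at this
      simp only at this
      tauto

lemma B_ne_of_proper' (ht : t.IsDFS) (h3 : GraphKConn t.ends 3) {v v' : V}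
    (hvv : t.Anc v v') (hne : v ≠ v') : t.B v ≠ t.B v' := by
  classical
  intro hB
  set A : Set V := {x | t.Anc v x ∧ ¬ t.Anc v' x} with hAdef
  set S : Finset E := {t.treeEdge v, t.treeEdge v'} with hSdef
  have hmem : ∀ e, e ∉ (S : Set E) → (((t.ends e).1 ∈ A ↔ (t.ends e).2 ∈ A)) := by
    intro e heS
    simp only [hSdef, Finset.coe_insert, Finset.coe_singleton, Set.mem_insert_iff,
      Set.mem_singleton_iff, not_or] at heS
    obtain ⟨hev, hev'⟩ := heS
    by_cases hte : t.IsTreeEdge e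
    · obtain ⟨w, hw, rfl⟩ := hte
      have hwv : w ≠ v := fun h => hev (by rw [h])
      have hwv' : w ≠ v' := fun h => hev' (by rw [h])
      rw [ht.tree_ends w hw]
      simp only
      constructor
      · rintro ⟨h1, h2⟩
        exact ⟨anc_parent_of_anc' h1 (Ne.symm hwv),
          fun h => h2 (anc_of_anc_parent' h hw)⟩
      · rintro ⟨h1, h2⟩
        exact ⟨anc_of_anc_parent' h1 hw,
          fun h => h2 (anc_parent_of_anc' h (Ne.symm hwv'))⟩
    · have hb := ht.back e hte
      constructor
      · rintro ⟨hvx, hnv'x⟩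
        rcases anc_comparable' hvx hb with h | h
        · exact ⟨h, fun h2 => hnv'x (anc_trans' h2 hb)⟩
        · by_cases hyv : (t.ends e).2 = v
          · exact ⟨hyv ▸ anc_refl' _, fun h2 => hnv'x (anc_trans' (hyv ▸ h2) hb)⟩
          · have heBv : e ∈ t.B v := ⟨hte, hvx, h, hyv⟩
            rw [hB] at heBv
            exact absurd heBv.2.1 hnv'x
      · rintro ⟨hvy, hnv'y⟩
        refine ⟨anc_trans' hvy hb, fun hv'x => ?_⟩
        rcases anc_comparable' hv'x hb with h | h
        · exact hnv'y h
        · have hyv' : (t.ends e).2 ≠ v' := fun h2 => hnv'y (h2 ▸ anc_refl' _)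
          have heBv' : e ∈ t.B v' := ⟨hte, hv'x, h, hyv'⟩
          rw [← hB] at heBv'
          exact heBv'.2.2.2 (anc_antisymm' ht heBv'.2.2.1 hvy)
  have hcard : S.card < 3 := lt_of_le_of_lt (Finset.card_insert_le _ _) (by simp)
  have hreach := h3 S hcard v v'
  have hiff := reach_mem_iff' hmem hreach
  have hvA : v ∈ A := ⟨anc_refl' v, fun h => hne (anc_antisymm' ht hvv h)⟩
  exact (hiff.mp hvA).2 (anc_refl' v')

lemma aux_main' (ht : t.IsDFS) (h3 : GraphKConn t.ends 3) {v v' u : V}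
    (hvv : t.Anc v v') (hne : v ≠ v') (hvu : t.Anc v u) (hv'u : t.Anc v' u)
    {e e' : E} (hBe : t.B u = insert e (t.B v)) (heB : e ∉ t.B v)
    (hBe' : t.B u = insert e' (t.B v')) (he'B : e' ∉ t.B v') : False := by
  by_cases hee : e = e'
  · subst hee
    have h1 : insert e (t.B v) = insert e (t.B v') := hBe.symm.trans hBe'
    have hBB : t.B v = t.B v' := by
      ext x
      constructor <;> intro hx
      · have : x ∈ insert e (t.B v') := h1 ▸ Set.mem_insert_of_mem _ hx
        rcases this with rfl | h
        · exact absurd hx heB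
        · exact h
      · have : x ∈ insert e (t.B v) := h1 ▸ Set.mem_insert_of_mem _ hx
        rcases this with rfl | h
        · exact absurd hx he'B
        · exact h
    exact B_ne_of_proper' ht h3 hvv hne hBB
  · have he'Bu : e' ∈ t.B u := hBe' ▸ Set.mem_insert _ _
    have he'Bv : e' ∈ t.B v := by
      have h2 : e' ∈ insert e (t.B v) := hBe ▸ he'Bu
      rcases h2 with h2 | h2
      · exact absurd h2.symm hee
      · exact h2
    obtain ⟨hnt, hancu, -⟩ := he'Bu
    obtain ⟨-, -, hyv, hyne⟩ := he'Bv
    exact he'B ⟨hnt, anc_trans' hv'u hancu, anc_trans' hyv hvv,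
      fun h => hne (anc_antisymm' ht hvv (h ▸ hyv))⟩

end DFSTree

/-- Let `U(v)` be the set of descendants `u` of `v` with `B(u) = B(v) ⊔ {e}` for
some back-edge `e`. Then `U(v)` and `U(v')` are disjoint for `v ≠ v'`. -/
theorem Usets_disjoint (t : DFSTree V E) (ht : t.IsDFS)
    (h3 : GraphKConn t.ends 3) (v v' : V) (hne : v ≠ v') :
    {u | t.Anc v u ∧ ∃ e, t.B u = insert e (t.B v) ∧ e ∉ t.B v} ∩
      {u | t.Anc v' u ∧ ∃ e, t.B u = insert e (t.B v') ∧ e ∉ t.B v'} = ∅ := by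
  ext u
  simp only [Set.mem_inter_iff, Set.mem_setOf_eq, Set.mem_empty_iff_false, iff_false]
  rintro ⟨⟨hvu, e, hBe, heB⟩, ⟨hv'u, e', hBe', he'B⟩⟩
  rcases DFSTree.anc_comparable' hvu hv'u with h | h
  · exact DFSTree.aux_main' ht h3 h hne hvu hv'u hBe heB hBe' he'B
  · exact DFSTree.aux_main' ht h3 h hne.symm hv'u hvu hBe' he'B hBe heB
end
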